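/- Fix a real number p ≥ 2. For integers n > p define AT(n,p) = π^{-1/2} n^{-1/p} ((p-1)/(n-p))^{1/p'} (Γ(n/2+1) Γ(n) / (Γ(n/p) Γ(n/p' + 1)))^{1/n} and S(n,p) = (p*/n)(1 - 1/n) p^{-1/p} (2π)^{-1/2} (e/n)^{1/p' - 1/2} (Γ(n)/Γ(n/p))^{1/n}, where p' = p/(p-1) and p* = pn/(n-p). Then lim_{n→∞} S(n,p)/AT(n,p) = 1. -/

import Mathlib

open Real Filter

/-- The sharp Aubin–Talenti constant in the Euclidean `L^p`-Sobolev inequality on `ℝ^n`. -/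
noncomputable def AT (n : ℕ) (p : ℝ) : ℝ :=
  Real.pi ^ (-(1 : ℝ) / 2) * (n : ℝ) ^ (-(1 : ℝ) / p) *
    ((p - 1) / ((n : ℝ) - p)) ^ (1 / (p / (p - 1))) *
    (Real.Gamma ((n : ℝ) / 2 + 1) * Real.Gamma (n : ℝ) /
        (Real.Gamma ((n : ℝ) / p) * Real.Gamma ((n : ℝ) / (p / (p - 1)) + 1))) ^ ((1 : ℝ) / n)

/-- The Sobolev constant obtained for minimal submanifolds, `p ≥ 2`. -/
noncomputable def S (n : ℕ) (p : ℝ) : ℝ :=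
  ((p * n / ((n : ℝ) - p)) / n) * (1 - 1 / (n : ℝ)) * p ^ (-(1 : ℝ) / p) *
    (2 * Real.pi) ^ (-(1 : ℝ) / 2) *
    (Real.exp 1 / n) ^ (1 / (p / (p - 1)) - 1 / 2) *
    (Real.Gamma (n : ℝ) / Real.Gamma ((n : ℝ) / p)) ^ ((1 : ℝ) / n)


lemma logfac : Tendsto (fun k : ℕ => (Real.log (k.factorial : ℝ) - ((k:ℝ) * Real.log k - k)) / k) atTop (nhds 0) := by
  have hne : ∀ᶠ k : ℕ in atTop, (Real.sqrt (2 * k * π) * ((k:ℝ) / exp 1) ^ k) ≠ 0 := by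
    filter_upwards [eventually_ne_atTop 0] with k hk
    have : (0:ℝ) < k := by positivity
    positivity
  have h1 : Tendsto (fun k : ℕ => (k.factorial : ℝ) / (Real.sqrt (2 * k * π) * ((k:ℝ) / exp 1) ^ k)) atTop (nhds 1) :=
    (Asymptotics.isEquivalent_iff_tendsto_one hne).mp Stirling.factorial_isEquivalent_stirling
  have h2 : Tendsto (fun k : ℕ => Real.log ((k.factorial : ℝ) / (Real.sqrt (2 * k * π) * ((k:ℝ) / exp 1) ^ k))) atTop (nhds 0) := by
    have := h1.log one_ne_zero
    simpa using this
  have h3 : Tendsto (fun k : ℕ => Real.log ((k:ℝ)) / k) atTop (nhds 0) :=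
    (Real.isLittleO_log_id_atTop.tendsto_div_nhds_zero).comp tendsto_natCast_atTop_atTop
  have h4 : Tendsto (fun k : ℕ => (Real.log (2*π) / 2) / k) atTop (nhds 0) :=
    tendsto_const_div_atTop_nhds_zero_nat _
  have h5 : Tendsto (fun k : ℕ => Real.log ((k.factorial : ℝ) / (Real.sqrt (2 * k * π) * ((k:ℝ) / exp 1) ^ k)) / k) atTop (nhds 0) :=
    h2.div_atTop tendsto_natCast_atTop_atTop
  have key : Tendsto (fun k : ℕ => Real.log ((k.factorial : ℝ) / (Real.sqrt (2 * k * π) * ((k:ℝ) / exp 1) ^ k)) / k + (Real.log ((k:ℝ)) / k / 2 + (Real.log (2*π) / 2) / k)) atTop (nhds 0) := by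
    simpa using (h5.add ((h3.div_const 2).add h4))
  refine key.congr' ?_
  filter_upwards [eventually_ge_atTop 1] with k hk
  have hk0 : (0:ℝ) < k := by exact_mod_cast hk
  have hfac : (0:ℝ) < k.factorial := by exact_mod_cast k.factorial_pos
  have hs : (0:ℝ) < Real.sqrt (2 * k * π) := Real.sqrt_pos.mpr (by positivity)
  have hpow : ((k:ℝ) / exp 1) ^ k ≠ 0 := by positivity
  rw [Real.log_div hfac.ne' (by positivity), Real.log_mul hs.ne' hpow,
    Real.log_sqrt (by positivity), Real.log_pow, Real.log_div hk0.ne' (Real.exp_ne_zero 1),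
    Real.log_exp, Real.log_mul (by positivity) Real.pi_ne_zero,
    Real.log_mul two_ne_zero hk0.ne', Real.log_mul two_ne_zero Real.pi_ne_zero]
  field_simp
  ring


lemma fdiff {s t : ℝ} (h1 : 1 ≤ s) (hst : s ≤ t) (hts : t ≤ s + 1) :
    |(t * Real.log t - t) - (s * Real.log s - s)| ≤ Real.log t + 2 := by
  have hs0 : 0 < s := by linarith
  have ht1 : 1 ≤ t := le_trans h1 hst
  have ht0 : 0 < t := by linarith
  have hlt : 0 ≤ Real.log t := Real.log_nonneg ht1
  have e3 : 0 ≤ Real.log t - Real.log s := sub_nonneg.mpr (Real.log_le_log hs0 hst)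
  have e1 : Real.log t - Real.log s ≤ t / s - 1 := by
    have := Real.log_le_sub_one_of_pos (show 0 < t / s by positivity)
    rwa [Real.log_div ht0.ne' hs0.ne'] at this
  have e2 : s * (Real.log t - Real.log s) ≤ t - s := by
    have h := mul_le_mul_of_nonneg_left e1 hs0.le
    have h2 : s * (t / s - 1) = t - s := by field_simp
    linarith [h2 ▸ h]
  have e4 : (t - s) * Real.log t ≤ Real.log t := by nlinarith
  have e5 : 0 ≤ s * (Real.log t - Real.log s) := mul_nonneg hs0.le e3
  have idd : t * Real.log t - t - (s * Real.log s - s)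
      = (t - s) * Real.log t + s * (Real.log t - Real.log s) - (t - s) := by ring
  rw [idd, abs_le]
  constructor <;> nlinarith [mul_nonneg (sub_nonneg.mpr hst) hlt]

lemma logDn (a : ℝ) (ha : 0 < a) :
    Tendsto (fun n : ℕ => (Real.log ((n:ℝ)/a) + (Real.log 2 + 2)) / n) atTop (nhds 0) := by
  have h3 : Tendsto (fun n : ℕ => Real.log ((n:ℝ)) / n) atTop (nhds 0) :=
    (Real.isLittleO_log_id_atTop.tendsto_div_nhds_zero).comp tendsto_natCast_atTop_atTop
  have h4 : Tendsto (fun n : ℕ => (Real.log 2 + 2 - Real.log a) / n) atTop (nhds 0) :=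
    tendsto_const_div_atTop_nhds_zero_nat _
  have key : Tendsto (fun n : ℕ => Real.log ((n:ℝ)) / n + (Real.log 2 + 2 - Real.log a) / n) atTop (nhds 0) := by
    simpa using h3.add h4
  refine key.congr' ?_
  filter_upwards [eventually_ge_atTop 1] with n hn
  have hn0 : (0:ℝ) < n := by exact_mod_cast hn
  rw [Real.log_div hn0.ne' ha.ne']
  ring

set_option maxHeartbeats 2000000 in
lemma lemA (a : ℝ) (ha : 0 < a) :
    Tendsto (fun n : ℕ => (Real.log (Real.Gamma ((n:ℝ)/a + 1)) -
      (((n:ℝ)/a) * Real.log ((n:ℝ)/a) - (n:ℝ)/a)) / n) atTop (nhds 0) := by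
  set x : ℕ → ℝ := fun n => (n:ℝ)/a with hxdef
  set m : ℕ → ℕ := fun n => ⌊x n⌋₊ with hmdef
  have hxTop : Tendsto x atTop atTop :=
    (tendsto_natCast_atTop_atTop (R := ℝ)).atTop_div_const ha
  have hmTop : Tendsto m atTop atTop := tendsto_nat_floor_atTop.comp hxTop
  have hev : ∀ᶠ n : ℕ in atTop, 2 ≤ x n := hxTop.eventually_ge_atTop 2
  have hevn : ∀ᶠ n : ℕ in atTop, 1 ≤ n := eventually_ge_atTop 1
  have hfacts : ∀ᶠ n : ℕ in atTop, (2:ℝ) ≤ (m n) ∧ ((m n):ℝ) ≤ x n ∧ x n < (m n) + 1 ∧ (0:ℝ) < n := by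
    filter_upwards [hev, hevn] with n h2 h1
    have hx0 : 0 ≤ x n := by linarith
    refine ⟨?_, Nat.floor_le hx0, Nat.lt_floor_add_one _, by exact_mod_cast h1⟩
    calc (2:ℝ) = ((2:ℕ):ℝ) := by norm_num
    _ ≤ ((m n):ℝ) := by exact_mod_cast Nat.le_floor (by exact_mod_cast h2)
  have Dlim := logDn a ha
  -- m/n → 1/a
  have c2 : Tendsto (fun n : ℕ => ((m n : ℝ)) / n) atTop (nhds (1/a)) := by
    have hlow : Tendsto (fun n : ℕ => 1/a - 1/(n:ℝ)) atTop (nhds (1/a)) := by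
      simpa using tendsto_const_nhds.sub (tendsto_one_div_atTop_nhds_zero_nat : Tendsto (fun n : ℕ => 1/(n:ℝ)) atTop (nhds 0))
    refine tendsto_of_tendsto_of_tendsto_of_le_of_le' hlow tendsto_const_nhds ?_ ?_
    · filter_upwards [hfacts] with n ⟨h2, hle, hlt, hn0⟩
      have e : 1/a - 1/(n:ℝ) = (x n - 1)/n := by
        simp only [hxdef]; field_simp
      rw [e, div_le_div_iff_of_pos_right hn0]
      linarith
    · filter_upwards [hfacts] with n ⟨h2, hle, hlt, hn0⟩
      have e : 1/a = x n / n := by simp only [hxdef]; field_simp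
      rw [e, div_le_div_iff_of_pos_right hn0]
      exact hle
  have c2' : Tendsto (fun n : ℕ => (((m n : ℝ)) + 1) / n) atTop (nhds (1/a)) := by
    have := c2.add (tendsto_one_div_atTop_nhds_zero_nat)
    rw [add_zero] at this
    refine this.congr ?_
    intro n; rw [add_div]
  have c1 : Tendsto (fun n : ℕ =>
      (Real.log ((m n).factorial : ℝ) - ((m n : ℝ) * Real.log (m n) - (m n))) / (m n)) atTop (nhds 0) :=
    logfac.comp hmTop
  have hm1Top : Tendsto (fun n => m n + 1) atTop atTop := tendsto_atTop_mono (fun n => Nat.le_succ (m n)) hmTop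
  have c1' : Tendsto (fun n : ℕ =>
      (Real.log ((m n + 1).factorial : ℝ) - (((m n : ℝ) + 1) * Real.log ((m n : ℝ) + 1) - ((m n : ℝ)+1))) / ((m n : ℝ)+1)) atTop (nhds 0) := by
    have := logfac.comp hm1Top
    refine this.congr fun n => ?_
    simp only [Function.comp_apply]
    push_cast
    ring
  -- the D bound limit
  have Dlim2 : Tendsto (fun n : ℕ => (Real.log (x n) + (Real.log 2 + 2)) / n) atTop (nhds 0) := Dlim
  -- lower sequence tends to 0
  have llow : Tendsto (fun n : ℕ =>
      (Real.log ((m n).factorial : ℝ) - (x n * Real.log (x n) - x n)) / n) atTop (nhds 0) := by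
    have part1 : Tendsto (fun n : ℕ =>
        ((Real.log ((m n).factorial : ℝ) - ((m n : ℝ) * Real.log (m n) - (m n))) / (m n)) * ((m n : ℝ)/n)) atTop (nhds 0) := by
      simpa using c1.mul c2
    have part2 : Tendsto (fun n : ℕ =>
        (((m n : ℝ) * Real.log (m n) - (m n)) - (x n * Real.log (x n) - x n)) / n) atTop (nhds 0) := by
      apply squeeze_zero_norm' _ Dlim2
      filter_upwards [hfacts] with n ⟨h2, hle, hlt, hn0⟩
      have hb := fdiff (show (1:ℝ) ≤ (m n) by linarith) hle hlt.le
      rw [Real.norm_eq_abs, abs_div, abs_of_pos hn0, abs_sub_comm]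
      have hl2 : 0 ≤ Real.log 2 := Real.log_nonneg (by norm_num)
      apply div_le_div_of_nonneg_right ?_ hn0.le |>.trans_eq rfl
      linarith
    have key := part1.add part2
    rw [add_zero] at key
    refine key.congr' ?_
    filter_upwards [hfacts] with n ⟨h2, hle, hlt, hn0⟩
    have hm0 : ((m n):ℝ) ≠ 0 := by linarith
    field_simp
    try ring
  -- upper sequence tends to 0
  have lup : Tendsto (fun n : ℕ =>
      (Real.log ((m n + 1).factorial : ℝ) - (x n * Real.log (x n) - x n)) / n) atTop (nhds 0) := by
    have part1 : Tendsto (fun n : ℕ =>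
        ((Real.log ((m n + 1).factorial : ℝ) - (((m n : ℝ)+1) * Real.log ((m n : ℝ)+1) - ((m n : ℝ)+1))) / ((m n : ℝ)+1)) * (((m n : ℝ)+1)/n)) atTop (nhds 0) := by
      simpa using c1'.mul c2'
    have part2 : Tendsto (fun n : ℕ =>
        ((((m n : ℝ)+1) * Real.log ((m n : ℝ)+1) - ((m n : ℝ)+1)) - (x n * Real.log (x n) - x n)) / n) atTop (nhds 0) := by
      apply squeeze_zero_norm' _ Dlim2
      filter_upwards [hfacts] with n ⟨h2, hle, hlt, hn0⟩
      have hx1 : (1:ℝ) ≤ x n := by linarith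
      have hb := fdiff hx1 hlt.le (by linarith)
      rw [Real.norm_eq_abs, abs_div, abs_of_pos hn0]
      apply div_le_div_of_nonneg_right ?_ hn0.le |>.trans_eq rfl
      have hlog : Real.log ((m n : ℝ) + 1) ≤ Real.log 2 + Real.log (x n) := by
        rw [← Real.log_mul (by norm_num) (by linarith : x n ≠ 0)]
        apply Real.log_le_log (by linarith)
        linarith
      linarith
    have key := part1.add part2
    rw [add_zero] at key
    refine key.congr' ?_
    filter_upwards [hfacts] with n ⟨h2, hle, hlt, hn0⟩
    have hm0 : ((m n):ℝ) + 1 ≠ 0 := by linarith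
    field_simp
    try ring
  -- squeeze
  refine tendsto_of_tendsto_of_tendsto_of_le_of_le' llow lup ?_ ?_
  · filter_upwards [hfacts] with n ⟨h2, hle, hlt, hn0⟩
    apply div_le_div_of_nonneg_right ?_ hn0.le |>.trans_eq rfl
    have hmono : Real.Gamma ((m n : ℝ) + 1) ≤ Real.Gamma (x n + 1) := by
      apply Real.Gamma_strictMonoOn_Ici.monotoneOn (by simp; linarith) (by simp; linarith)
      linarith
    rw [Real.Gamma_nat_eq_factorial] at hmono
    have hpos : (0:ℝ) < ((m n).factorial : ℝ) := by exact_mod_cast (m n).factorial_pos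
    have := Real.log_le_log hpos hmono
    linarith
  · filter_upwards [hfacts] with n ⟨h2, hle, hlt, hn0⟩
    apply div_le_div_of_nonneg_right ?_ hn0.le |>.trans_eq rfl
    have hmono : Real.Gamma (x n + 1) ≤ Real.Gamma (((m n : ℕ) + 1 : ℕ) + 1) := by
      apply Real.Gamma_strictMonoOn_Ici.monotoneOn (by simp; linarith) ?_ ?_
      · simp; push_cast; linarith
      · push_cast; linarith
    rw [Real.Gamma_nat_eq_factorial] at hmono
    have hpos : (0:ℝ) < Real.Gamma (x n + 1) := Real.Gamma_pos_of_pos (by linarith)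
    have := Real.log_le_log hpos hmono
    linarith

set_option maxHeartbeats 1000000 in
theorem stmt_10 (p : ℝ) (hp : 2 ≤ p) :
    Filter.Tendsto (fun n : ℕ => S n p / AT n p) Filter.atTop (nhds 1) := by
  have hp0 : 0 < p := by linarith
  have hpm1 : 0 < p - 1 := by linarith
  have hq0 : 0 < p / (p - 1) := by positivity
  have A1 := lemA (p/(p-1)) hq0
  have A2 := lemA 2 two_pos
  have hB : Tendsto (fun n : ℕ => Real.log ((n:ℝ)) - Real.log ((n:ℝ) - p)) atTop (nhds 0) := by
    have h1 : Tendsto (fun n : ℕ => ((n:ℝ) - p)/(n:ℝ)) atTop (nhds 1) := by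
      have h0 : Tendsto (fun n : ℕ => 1 - p * (1/(n:ℝ))) atTop (nhds 1) := by
        simpa using tendsto_const_nhds.sub ((tendsto_one_div_atTop_nhds_zero_nat).const_mul p)
      refine h0.congr' ?_
      filter_upwards [eventually_ge_atTop 1] with n hn
      have hn0 : ((n:ℝ)) ≠ 0 := by
        have : (0:ℝ) < n := by exact_mod_cast hn
        exact this.ne'
      field_simp
    have h2 : Tendsto (fun n : ℕ => ((n:ℝ))/((n:ℝ) - p)) atTop (nhds 1) := by
      have := h1.inv₀ one_ne_zero
      simpa [inv_div] using this
    have h3 : Tendsto (fun n : ℕ => Real.log (((n:ℝ))/((n:ℝ) - p))) atTop (nhds 0) := by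
      simpa using h2.log one_ne_zero
    refine h3.congr' ?_
    filter_upwards [(tendsto_natCast_atTop_atTop (R := ℝ)).eventually_ge_atTop (p+1)] with n hn
    have hn0 : ((n:ℝ)) ≠ 0 := by nlinarith
    have hnp : ((n:ℝ)) - p ≠ 0 := by nlinarith
    rw [Real.log_div hn0 hnp]
  have hC : Tendsto (fun n : ℕ => Real.log (1 - 1/(n:ℝ))) atTop (nhds 0) := by
    have h0 : Tendsto (fun n : ℕ => 1 - 1/(n:ℝ)) atTop (nhds 1) := by
      simpa using tendsto_const_nhds.sub (tendsto_one_div_atTop_nhds_zero_nat : Tendsto (fun n : ℕ => 1/(n:ℝ)) atTop (nhds 0))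
    simpa using h0.log one_ne_zero
  have hE : Tendsto (fun n : ℕ =>
      ((Real.log (Real.Gamma ((n:ℝ)/(p/(p-1)) + 1)) -
          (((n:ℝ)/(p/(p-1))) * Real.log ((n:ℝ)/(p/(p-1))) - (n:ℝ)/(p/(p-1)))) / n
        - (Real.log (Real.Gamma ((n:ℝ)/2 + 1)) -
          (((n:ℝ)/2) * Real.log ((n:ℝ)/2) - (n:ℝ)/2)) / n
        + (1/p) * (Real.log ((n:ℝ)) - Real.log ((n:ℝ) - p))
        + Real.log (1 - 1/(n:ℝ)))) atTop (nhds 0) := by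
    simpa using ((A1.sub A2).add (hB.const_mul (1/p))).add hC
  have hexp : Tendsto (fun n : ℕ => Real.exp (
      (Real.log (Real.Gamma ((n:ℝ)/(p/(p-1)) + 1)) -
          (((n:ℝ)/(p/(p-1))) * Real.log ((n:ℝ)/(p/(p-1))) - (n:ℝ)/(p/(p-1)))) / n
        - (Real.log (Real.Gamma ((n:ℝ)/2 + 1)) -
          (((n:ℝ)/2) * Real.log ((n:ℝ)/2) - (n:ℝ)/2)) / n
        + (1/p) * (Real.log ((n:ℝ)) - Real.log ((n:ℝ) - p))
        + Real.log (1 - 1/(n:ℝ)))) atTop (nhds 1) := by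
    have := (Real.continuous_exp.continuousAt (x := (0:ℝ))).tendsto.comp hE
    simpa [Function.comp_def] using this
  refine hexp.congr' ?_
  filter_upwards [(tendsto_natCast_atTop_atTop (R := ℝ)).eventually_ge_atTop (2*p+2)] with n hn
  have hN : (0:ℝ) < n := by nlinarith
  have hNp : (0:ℝ) < (n:ℝ) - p := by nlinarith
  have hN1 : (0:ℝ) < 1 - 1/(n:ℝ) := by
    rw [sub_pos, div_lt_one hN]; nlinarith
  have hG1 : 0 < Real.Gamma ((n:ℝ)/2 + 1) := Real.Gamma_pos_of_pos (by positivity)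
  have hG2 : 0 < Real.Gamma ((n:ℝ)) := Real.Gamma_pos_of_pos hN
  have hG3 : 0 < Real.Gamma ((n:ℝ)/p) := Real.Gamma_pos_of_pos (by positivity)
  have hG4 : 0 < Real.Gamma ((n:ℝ)/(p/(p-1)) + 1) := Real.Gamma_pos_of_pos (by positivity)
  have hS : 0 < S n p := by
    rw [S]; positivity
  have hAT : 0 < AT n p := by
    rw [AT]; positivity
  rw [← Real.exp_log (div_pos hS hAT)]
  congr 1
  rw [Real.log_div hS.ne' hAT.ne', S, AT]
  rw [Real.log_mul (by positivity) (by positivity), Real.log_mul (by positivity) (by positivity),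
    Real.log_mul (by positivity) (by positivity), Real.log_mul (by positivity) (by positivity),
    Real.log_mul (by positivity) (by positivity)]
  rw [Real.log_mul (by positivity) (by positivity), Real.log_mul (by positivity) (by positivity),
    Real.log_mul (by positivity) (by positivity)]
  rw [Real.log_div (by positivity) hN.ne', Real.log_div (by positivity) hNp.ne',
    Real.log_mul hp0.ne' hN.ne']
  rw [Real.log_rpow hp0, Real.log_rpow (by positivity), Real.log_rpow (by positivity),
    Real.log_rpow (by positivity), Real.log_rpow pi_pos, Real.log_rpow hN,
    Real.log_rpow (by positivity), Real.log_rpow (by positivity)]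
  rw [Real.log_div (Real.exp_ne_zero 1) hN.ne', Real.log_exp,
    Real.log_div hG2.ne' hG3.ne',
    Real.log_mul two_ne_zero pi_ne_zero,
    Real.log_div hpm1.ne' hNp.ne',
    Real.log_div (mul_pos hG1 hG2).ne' (mul_pos hG3 hG4).ne',
    Real.log_mul hG1.ne' hG2.ne', Real.log_mul hG3.ne' hG4.ne']
  rw [Real.log_div hN.ne' hq0.ne', Real.log_div hp0.ne' hpm1.ne',
    Real.log_div hN.ne' two_ne_zero]
  field_simp
  ring
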